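/- Let n ≥ 4 be even, let Φ and φ_2 be real, and define D_1 = (n−1)φ_2 + (n−1)(n−2)Φ/2 and D_j = −φ_2 − (n−j)Φ for 2 ≤ j ≤ n, and X_D = (D_1,…,D_n). Then for every strictly increasing 2k-tuple r in [1,n] (1 ≤ k ≤ n/2), L_r(X_D) = nφ_2 + n(n−1)Φ/2 − (φ_2 + nΦ) S(r) + Φ L_r(X_N), and equivalently L_r(X_D) = nφ_2 + n(n−2)Φ/2 − (φ_2 + nΦ − Φ/2) S(r) + Φ W(r), where X_N = (1,2,…,n). -/

import Mathlib

open Finset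

-- The sign pattern `c_j` of the alternating form `L_r` for a tuple `r` given by its
-- (1-based) entries `r 1, …, r twok`: `c_1 = 1` and, for `1 ≤ j`, `c_{j+1} = c_j` if
-- `j ∈ {r_1,…,r_{twok}}` and `c_{j+1} = −c_j` otherwise.
open Classical in
noncomputable def signPatN (twok : ℕ) (r : ℕ → ℕ) : ℕ → ℤ
  | 0 => 1
  | 1 => 1
  | (j + 2) =>
    if ∃ i ∈ Finset.Icc 1 twok, r i = j + 1 then signPatN twok r (j + 1)
    else -signPatN twok r (j + 1)

/-- The alternating linear form `L_r(X) = Σ_{j=1}^n c_j x_j`. -/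
noncomputable def LformN (n twok : ℕ) (r : ℕ → ℕ) (X : ℕ → ℝ) : ℝ :=
  ∑ j ∈ Finset.Icc 1 n, (signPatN twok r j : ℝ) * X j

/-- Signature `S(r) = Σ_{j=1}^{2k} (−1)^{j+r_j}`. -/
def SigI (k : ℕ) (r : ℕ → ℕ) : ℤ :=
  ∑ j ∈ Finset.Icc 1 (2 * k), (-1) ^ (j + r j)

/-- Weighted signature `W(r) = Σ_{j=1}^{2k} (−1)^{j+r_j} r_j`. -/
def WsigI (k : ℕ) (r : ℕ → ℕ) : ℤ :=
  ∑ j ∈ Finset.Icc 1 (2 * k), (-1) ^ (j + r j) * (r j : ℤ)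


lemma abel_sum' (a d A : ℕ → ℤ) (h0 : A 0 = 0) (hA : ∀ j, A (j + 1) = A j + a (j + 1)) :
    ∀ m : ℕ, ∑ j ∈ Icc 1 m, a j * d j
      = ∑ j ∈ Icc 1 m, A j * (d j - d (j + 1)) + A m * d (m + 1) := by
  intro m
  induction m with
  | zero => simp [h0]
  | succ m ih =>
      rw [Finset.sum_Icc_succ_top (by omega), Finset.sum_Icc_succ_top (by omega), ih, hA]
      ring

lemma alt_sum_even' (k : ℕ) : ∑ i ∈ Icc 1 (2 * k), (-1 : ℤ) ^ (i + 1) = 0 := by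
  induction k with
  | zero => simp
  | succ k ih =>
      rw [show 2 * (k + 1) = (2 * k + 1) + 1 by ring,
        Finset.sum_Icc_succ_top (by omega), Finset.sum_Icc_succ_top (by omega), ih]
      have h1 : (-1 : ℤ) ^ (2 * k + 1 + 1) = 1 := Even.neg_one_pow ⟨k + 1, by ring⟩
      have h2 : (-1 : ℤ) ^ (2 * k + 1 + 1 + 1) = -1 := Odd.neg_one_pow ⟨k + 1, by ring⟩
      rw [h1, h2]; ring


/-- Partial sums of `(-1)^(j+1)`. -/
def AoneZ (j : ℕ) : ℤ := if Even j then 0 else 1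

/-- Partial sums of `(-1)^(j+1) * j`. -/
def AtwoZ (j : ℕ) : ℤ := (-1) ^ (j + 1) * (((j + 1) / 2 : ℕ) : ℤ)

lemma AoneZ_zero : AoneZ 0 = 0 := rfl

lemma AoneZ_succ (j : ℕ) : AoneZ (j + 1) = AoneZ j + (-1) ^ (j + 1 + 1) := by
  rcases Nat.even_or_odd j with h | h
  · obtain ⟨u, rfl⟩ := h
    have h1 : ¬Even (u + u + 1) := by rw [Nat.even_add_one]; simp [Nat.even_add]
    have h2 : Even (u + u) := ⟨u, rfl⟩
    have h3 : Even (u + u + 1 + 1) := ⟨u + 1, by ring⟩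
    rw [AoneZ, AoneZ, if_neg h1, if_pos h2, Even.neg_one_pow h3]
    norm_num
  · obtain ⟨u, rfl⟩ := h
    have h1 : Even (2 * u + 1 + 1) := ⟨u + 1, by ring⟩
    have h2 : ¬Even (2 * u + 1) := by simp [Nat.even_add_one, Nat.even_add]
    have h3 : Odd (2 * u + 1 + 1 + 1) := ⟨u + 1, by ring⟩
    rw [AoneZ, AoneZ, if_pos h1, if_neg h2, Odd.neg_one_pow h3]
    norm_num

lemma AtwoZ_zero : AtwoZ 0 = 0 := rfl

lemma AtwoZ_succ (j : ℕ) : AtwoZ (j + 1) = AtwoZ j + (-1) ^ (j + 1 + 1) * ((j : ℤ) + 1) := by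
  rcases Nat.even_or_odd j with h | h
  · obtain ⟨u, rfl⟩ := h
    rw [AtwoZ, AtwoZ, Even.neg_one_pow (⟨u + 1, by ring⟩ : Even (u + u + 1 + 1)),
      Odd.neg_one_pow (⟨u, by ring⟩ : Odd (u + u + 1)),
      show (u + u + 1 + 1) / 2 = u + 1 from by omega,
      show (u + u + 1) / 2 = u from by omega]
    push_cast
    ring
  · obtain ⟨u, rfl⟩ := h
    rw [AtwoZ, AtwoZ, Odd.neg_one_pow (⟨u + 1, by ring⟩ : Odd (2 * u + 1 + 1 + 1)),
      Even.neg_one_pow (⟨u + 1, by ring⟩ : Even (2 * u + 1 + 1)),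
      show (2 * u + 1 + 1 + 1) / 2 = u + 1 from by omega,
      show (2 * u + 1 + 1) / 2 = u + 1 from by omega]
    push_cast
    ring

section Aux
variable (k : ℕ) (r : ℕ → ℕ)

noncomputable def dF (j : ℕ) : ℤ :=
  (-1) ^ (((Icc 1 (2 * k)).filter (fun i => r i < j)).card)

variable {k r}
variable (hmono : ∀ i i' : ℕ, 1 ≤ i → i < i' → i' ≤ 2 * k → r i < r i')
  (hlo : ∀ i, 1 ≤ i → i ≤ 2 * k → 1 ≤ r i)

include hmono in
open Classical in
lemma rho_succ (j : ℕ) :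
    ((Icc 1 (2 * k)).filter (fun i => r i < j + 1)).card
      = ((Icc 1 (2 * k)).filter (fun i => r i < j)).card
        + (if ∃ i ∈ Icc 1 (2 * k), r i = j then 1 else 0) := by
  have hsplit : (Icc 1 (2 * k)).filter (fun i => r i < j + 1)
      = (Icc 1 (2 * k)).filter (fun i => r i < j) ∪ (Icc 1 (2 * k)).filter (fun i => r i = j) := by
    rw [← Finset.filter_or]
    apply Finset.filter_congr
    intro i _
    constructor
    · intro h; omega
    · intro h; omega
  rw [hsplit, Finset.card_union_of_disjoint]
  · congr 1
    split_ifs with h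
    · obtain ⟨i₀, hi₀, hri₀⟩ := h
      rw [Finset.card_eq_one]
      refine ⟨i₀, ?_⟩
      ext i
      simp only [Finset.mem_filter, Finset.mem_singleton, Finset.mem_Icc] at *
      constructor
      · rintro ⟨⟨h1, h2⟩, h3⟩
        by_contra hne
        rcases Nat.lt_or_ge i i₀ with hlt | hge
        · have := hmono i i₀ h1 hlt hi₀.2; omega
        · have hlt : i₀ < i := by omega
          have := hmono i₀ i hi₀.1 hlt h2; omega
      · rintro rfl; exact ⟨hi₀, hri₀⟩
    · rw [Finset.card_eq_zero, Finset.filter_eq_empty_iff]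
      intro i hi hri
      exact h ⟨i, hi, hri⟩
  · rw [Finset.disjoint_left]
    intro i h1 h2
    simp only [Finset.mem_filter] at h1 h2
    omega

include hmono hlo in
lemma sign_eq : ∀ j, 1 ≤ j → signPatN (2 * k) r j = (-1) ^ (j + 1) * dF k r j := by
  intro j hj
  induction j with
  | zero => omega
  | succ m ih =>
    rcases Nat.lt_or_ge m 1 with hm | hm
    · interval_cases m
      have hd : dF k r 1 = 1 := by
        unfold dF
        have : (Icc 1 (2 * k)).filter (fun i => r i < 1) = ∅ := by
          rw [Finset.filter_eq_empty_iff]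
          intro i hi
          simp only [Finset.mem_Icc] at hi
          have := hlo i hi.1 hi.2
          omega
        rw [this]; simp
      rw [hd]
      norm_num [signPatN]
    · obtain ⟨p, rfl⟩ : ∃ p, m = p + 1 := ⟨m - 1, by omega⟩
      have ihm := ih (by omega)
      have hrho := rho_succ hmono (r := r) (p + 1)
      rw [show p + 1 + 1 = p + 2 by rfl, signPatN]
      by_cases h : ∃ i ∈ Icc 1 (2 * k), r i = p + 1
      · rw [if_pos h, ihm]
        unfold dF at *
        rw [hrho, if_pos h, pow_add, pow_add, pow_add]
        ring
      · rw [if_neg h, ihm]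
        unfold dF at *
        rw [hrho, if_neg h, pow_add, pow_add]
        ring

include hmono in
lemma dF_r (i : ℕ) (hi : i ∈ Icc 1 (2 * k)) : dF k r (r i) = (-1) ^ (i + 1) := by
  simp only [Finset.mem_Icc] at hi
  have hfil : (Icc 1 (2 * k)).filter (fun m => r m < r i) = Icc 1 (i - 1) := by
    ext m
    simp only [Finset.mem_filter, Finset.mem_Icc]
    constructor
    · rintro ⟨⟨h1, h2⟩, h3⟩
      refine ⟨h1, ?_⟩
      by_contra hc
      have him : i ≤ m := by omega
      rcases Nat.eq_or_lt_of_le him with rfl | hlt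
      · omega
      · have := hmono i m hi.1 hlt h2; omega
    · rintro ⟨h1, h2⟩
      have hmi : m < i := by omega
      exact ⟨⟨h1, by omega⟩, hmono m i h1 hmi hi.2⟩
  unfold dF
  rw [hfil, Nat.card_Icc]
  rw [show i - 1 + 1 - 1 = i - 1 by omega, show i + 1 = (i - 1) + 2 by omega, pow_add]
  norm_num

include hmono in
open Classical in
lemma dF_diff (j : ℕ) :
    dF k r j - dF k r (j + 1) = if ∃ i ∈ Icc 1 (2 * k), r i = j then 2 * dF k r j else 0 := by
  have hrho := rho_succ hmono (r := r) j
  unfold dF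
  rw [hrho]
  split_ifs with h
  · rw [pow_add]; ring
  · rw [add_zero]; ring

include hmono hlo in
lemma mid_sum (n : ℕ) (hhi : ∀ i, 1 ≤ i → i ≤ 2 * k → r i ≤ n) (A : ℕ → ℤ) :
    ∑ j ∈ Icc 1 n, A j * (dF k r j - dF k r (j + 1))
      = ∑ i ∈ Icc 1 (2 * k), 2 * A (r i) * dF k r (r i) := by
  have hinj : ∀ x ∈ Icc 1 (2 * k), ∀ y ∈ Icc 1 (2 * k), r x = r y → x = y := by
    intro x hx y hy hxy
    simp only [Finset.mem_Icc] at hx hy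
    by_contra hne
    rcases Nat.lt_or_ge x y with h | h
    · have := hmono x y hx.1 h hy.2; omega
    · have := hmono y x hy.1 (by omega) hx.2; omega
  have hsub : (Icc 1 (2 * k)).image r ⊆ Icc 1 n := by
    intro j hj
    simp only [Finset.mem_image, Finset.mem_Icc] at hj
    obtain ⟨i, hi, rfl⟩ := hj
    exact Finset.mem_Icc.mpr ⟨hlo i hi.1 hi.2, hhi i hi.1 hi.2⟩
  have hvan : ∀ j ∈ Icc 1 n, j ∉ (Icc 1 (2 * k)).image r
      → A j * (dF k r j - dF k r (j + 1)) = 0 := by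
    intro j _ hj
    have hno : ¬∃ i ∈ Icc 1 (2 * k), r i = j := by
      intro ⟨i, hi, hri⟩
      exact hj (Finset.mem_image.mpr ⟨i, hi, hri⟩)
    rw [dF_diff hmono, if_neg hno, mul_zero]
  calc ∑ j ∈ Icc 1 n, A j * (dF k r j - dF k r (j + 1))
      = ∑ j ∈ (Icc 1 (2 * k)).image r, A j * (dF k r j - dF k r (j + 1)) :=
        (Finset.sum_subset hsub hvan).symm
    _ = ∑ j ∈ (Icc 1 (2 * k)).image r, A j * (2 * dF k r j) := by
        apply Finset.sum_congr rfl
        intro j hj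
        simp only [Finset.mem_image] at hj
        obtain ⟨i, hi, hri⟩ := hj
        rw [dF_diff hmono, if_pos ⟨i, hi, hri⟩]
    _ = ∑ i ∈ Icc 1 (2 * k), A (r i) * (2 * dF k r (r i)) := Finset.sum_image hinj
    _ = ∑ i ∈ Icc 1 (2 * k), 2 * A (r i) * dF k r (r i) :=
        Finset.sum_congr rfl (fun i _ => by ring)

end Aux


theorem stmt6 (n k : ℕ) (hn4 : 4 ≤ n) (hne : Even n) (hk1 : 1 ≤ k) (hk2 : k ≤ n / 2)
    (Φ φ2 : ℝ) (XD : ℕ → ℝ)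
    (hXD1 : XD 1 = ((n : ℝ) - 1) * φ2 + ((n : ℝ) - 1) * ((n : ℝ) - 2) / 2 * Φ)
    (hXDj : ∀ j : ℕ, 2 ≤ j → j ≤ n → XD j = -φ2 - ((n : ℝ) - j) * Φ)
    (r : ℕ → ℕ)
    (hinc : ∀ j : ℕ, 1 ≤ j → j < 2 * k → r j < r (j + 1))
    (hlb : 1 ≤ r 1) (hub : r (2 * k) ≤ n) :
    LformN n (2 * k) r XD =
      (n : ℝ) * φ2 + (n : ℝ) * ((n : ℝ) - 1) / 2 * Φ
        - (φ2 + (n : ℝ) * Φ) * (SigI k r : ℝ)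
        + Φ * LformN n (2 * k) r (fun j => (j : ℝ)) ∧
    LformN n (2 * k) r XD =
      (n : ℝ) * φ2 + (n : ℝ) * ((n : ℝ) - 2) / 2 * Φ
        - (φ2 + (n : ℝ) * Φ - Φ / 2) * (SigI k r : ℝ)
        + Φ * (WsigI k r : ℝ) := by
  obtain ⟨t, hnt⟩ := hne
  have hK1 : 1 ≤ 2 * k := by omega
  have hKn : 2 * k ≤ n := by omega
  -- strict monotonicity on [1, 2k]
  have hmono : ∀ i i' : ℕ, 1 ≤ i → i < i' → i' ≤ 2 * k → r i < r i' := by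
    intro i i' h1 hlt hle
    have H : ∀ m : ℕ, i + m + 1 ≤ 2 * k → r i < r (i + m + 1) := by
      intro m
      induction m with
      | zero => intro h; exact hinc i h1 (by omega)
      | succ m ih =>
          intro h
          have h1' := ih (by omega)
          have h2' := hinc (i + m + 1) (by omega) (by omega)
          exact lt_trans h1' h2'
    have := H (i' - i - 1) (by omega)
    rwa [show i + (i' - i - 1) + 1 = i' by omega] at this
  have hlo : ∀ i, 1 ≤ i → i ≤ 2 * k → 1 ≤ r i := by
    intro i h1 h2
    rcases eq_or_lt_of_le h1 with heq | h
    · rw [← heq]; exact hlb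
    · exact le_trans hlb (le_of_lt (hmono 1 i le_rfl h h2))
  have hhi : ∀ i, 1 ≤ i → i ≤ 2 * k → r i ≤ n := by
    intro i h1 h2
    rcases eq_or_lt_of_le h2 with heq | h
    · rw [heq]; exact hub
    · exact le_trans (le_of_lt (hmono i (2 * k) h1 h (le_refl _))) hub
  -- d at the points r i and at n + 1
  have hdr : ∀ i ∈ Icc 1 (2 * k), dF k r (r i) = (-1 : ℤ) ^ (i + 1) := fun i hi => dF_r hmono i hi
  have hdn : dF k r (n + 1) = 1 := by
    unfold dF
    have hfil : (Icc 1 (2 * k)).filter (fun i => r i < n + 1) = Icc 1 (2 * k) := by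
      rw [Finset.filter_eq_self]
      intro i hi
      simp only [Finset.mem_Icc] at hi
      have := hhi i hi.1 hi.2
      omega
    rw [hfil, Nat.card_Icc]
    exact Even.neg_one_pow ⟨k, by omega⟩
  -- the two integer sums
  have hSZ : ∑ j ∈ Icc 1 n, signPatN (2 * k) r j = SigI k r := by
    have e1 : ∑ j ∈ Icc 1 n, signPatN (2 * k) r j
        = ∑ j ∈ Icc 1 n, (fun j => (-1 : ℤ) ^ (j + 1)) j * dF k r j :=
      Finset.sum_congr rfl (fun j hj => sign_eq hmono hlo j (Finset.mem_Icc.mp hj).1)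
    rw [e1, abel_sum' _ _ AoneZ AoneZ_zero AoneZ_succ n, mid_sum hmono hlo n hhi AoneZ]
    have hAn : AoneZ n = 0 := if_pos ⟨t, hnt⟩
    rw [hAn, zero_mul, add_zero]
    have e2 : ∀ i ∈ Icc 1 (2 * k),
        2 * AoneZ (r i) * dF k r (r i) = (-1 : ℤ) ^ (i + r i) + (-1) ^ (i + 1) := by
      intro i hi
      rw [hdr i hi]
      rcases Nat.even_or_odd (r i) with h | h
      · have hA : AoneZ (r i) = 0 := if_pos h
        obtain ⟨u, hu⟩ := h
        rw [hA, hu, pow_add, pow_add, Even.neg_one_pow (⟨u, rfl⟩ : Even (u + u))]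
        ring
      · have hA : AoneZ (r i) = 1 := if_neg (Nat.not_even_iff_odd.mpr h)
        obtain ⟨u, hu⟩ := h
        rw [hA, hu, pow_add, pow_add, Odd.neg_one_pow (⟨u, rfl⟩ : Odd (2 * u + 1))]
        ring
    rw [Finset.sum_congr rfl e2, Finset.sum_add_distrib, alt_sum_even', add_zero]
    rfl
  have hTZ : 2 * ∑ j ∈ Icc 1 n, signPatN (2 * k) r j * (j : ℤ)
      = 2 * WsigI k r + SigI k r - n := by
    have e1 : ∑ j ∈ Icc 1 n, signPatN (2 * k) r j * (j : ℤ)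
        = ∑ j ∈ Icc 1 n, (fun m : ℕ => (-1 : ℤ) ^ (m + 1) * (m : ℤ)) j * dF k r j := by
      apply Finset.sum_congr rfl
      intro j hj
      rw [sign_eq hmono hlo j (Finset.mem_Icc.mp hj).1]
      ring
    have hA2 : ∀ j : ℕ, AtwoZ (j + 1) = AtwoZ j + (fun m : ℕ => (-1 : ℤ) ^ (m + 1) * (m : ℤ)) (j + 1) := by
      intro j
      show AtwoZ (j + 1) = AtwoZ j + (-1 : ℤ) ^ (j + 1 + 1) * ((j + 1 : ℕ) : ℤ)
      push_cast
      exact AtwoZ_succ j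
    rw [e1, abel_sum' _ _ AtwoZ AtwoZ_zero hA2 n, mid_sum hmono hlo n hhi AtwoZ, hdn, mul_one]
    have hAn : AtwoZ n = -(t : ℤ) := by
      rw [AtwoZ, Odd.neg_one_pow (⟨t, by omega⟩ : Odd (n + 1)),
        show (n + 1) / 2 = t from by omega]
      ring
    have e2 : ∀ i ∈ Icc 1 (2 * k),
        2 * (2 * AtwoZ (r i) * dF k r (r i))
          = 2 * ((-1 : ℤ) ^ (i + r i) * (r i : ℤ)) + ((-1) ^ (i + r i) + (-1) ^ (i + 1)) := by
      intro i hi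
      rw [hdr i hi]
      rcases Nat.even_or_odd (r i) with h | h
      · obtain ⟨u, hu⟩ := h
        rw [AtwoZ, hu, Odd.neg_one_pow (⟨u, by omega⟩ : Odd (u + u + 1)),
          show (u + u + 1) / 2 = u from by omega, pow_add, pow_add,
          Even.neg_one_pow (⟨u, rfl⟩ : Even (u + u))]
        push_cast
        ring
      · obtain ⟨u, hu⟩ := h
        rw [AtwoZ, hu, Even.neg_one_pow (⟨u + 1, by omega⟩ : Even (2 * u + 1 + 1)),
          show (2 * u + 1 + 1) / 2 = u + 1 from by omega, pow_add, pow_add,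
          Odd.neg_one_pow (⟨u, rfl⟩ : Odd (2 * u + 1))]
        push_cast
        ring
    rw [mul_add, Finset.mul_sum, Finset.sum_congr rfl e2, Finset.sum_add_distrib,
      Finset.sum_add_distrib, alt_sum_even', add_zero, ← Finset.mul_sum]
    have hW : ∑ i ∈ Icc 1 (2 * k), (-1 : ℤ) ^ (i + r i) * (r i : ℤ) = WsigI k r := rfl
    have hS : ∑ i ∈ Icc 1 (2 * k), (-1 : ℤ) ^ (i + r i) = SigI k r := rfl
    rw [hW, hS, hAn]
    have : (n : ℤ) = 2 * t := by omega
    rw [this]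
    ring
  -- expressing the two real linear forms
  have hLN : LformN n (2 * k) r (fun j => (j : ℝ))
      = ((∑ j ∈ Icc 1 n, signPatN (2 * k) r j * (j : ℤ) : ℤ) : ℝ) := by
    unfold LformN
    push_cast
    rfl
  have hc1 : signPatN (2 * k) r 1 = 1 := rfl
  have hLXD : LformN n (2 * k) r XD
      = (-φ2 - (n : ℝ) * Φ) * ((∑ j ∈ Icc 1 n, signPatN (2 * k) r j : ℤ) : ℝ)
        + Φ * ((∑ j ∈ Icc 1 n, signPatN (2 * k) r j * (j : ℤ) : ℤ) : ℝ)
        + ((n : ℝ) * φ2 + (n : ℝ) * ((n : ℝ) - 1) / 2 * Φ) := by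
    unfold LformN
    have hterm : ∀ j ∈ Icc 1 n, (signPatN (2 * k) r j : ℝ) * XD j
        = ((-φ2 - (n : ℝ) * Φ) * (signPatN (2 * k) r j : ℝ)
            + Φ * ((signPatN (2 * k) r j : ℝ) * (j : ℝ)))
          + (if j = 1 then (n : ℝ) * φ2 + (n : ℝ) * ((n : ℝ) - 1) / 2 * Φ else 0) := by
      intro j hj
      simp only [Finset.mem_Icc] at hj
      by_cases h1 : j = 1
      · subst h1
        rw [hXD1, if_pos rfl, hc1]
        push_cast
        ring
      · rw [hXDj j (by omega) hj.2, if_neg h1]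
        ring
    rw [Finset.sum_congr rfl hterm, Finset.sum_add_distrib, Finset.sum_add_distrib,
      ← Finset.mul_sum, ← Finset.mul_sum]
    have hite : ∑ j ∈ Icc 1 n, (if j = 1 then (n : ℝ) * φ2 + (n : ℝ) * ((n : ℝ) - 1) / 2 * Φ else 0)
        = (n : ℝ) * φ2 + (n : ℝ) * ((n : ℝ) - 1) / 2 * Φ := by
      rw [Finset.sum_ite_eq' (Icc 1 n) 1 (fun _ => (n : ℝ) * φ2 + (n : ℝ) * ((n : ℝ) - 1) / 2 * Φ),
        if_pos (Finset.mem_Icc.mpr ⟨le_refl 1, by omega⟩)]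
    rw [hite]
    push_cast
    ring
  -- conclusion
  have hSr : ((∑ j ∈ Icc 1 n, signPatN (2 * k) r j : ℤ) : ℝ) = (SigI k r : ℝ) := by
    rw [hSZ]
  have hTr : ((∑ j ∈ Icc 1 n, signPatN (2 * k) r j * (j : ℤ) : ℤ) : ℝ)
      = (WsigI k r : ℝ) + (SigI k r : ℝ) / 2 - (n : ℝ) / 2 := by
    have h2 := congrArg (fun z : ℤ => (z : ℝ)) hTZ
    simp only [Int.cast_mul, Int.cast_add, Int.cast_sub, Int.cast_ofNat,
      Int.cast_natCast, Int.cast_two] at h2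
    linarith
  constructor
  · rw [hLXD, hLN, hSr]
    ring
  · rw [hLXD, hSr, hTr]
    ring
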